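/- Let Y : [0,1] → G^m(V) be continuous and fix X, Y with p-variation controlled by a control ω (positive off the diagonal). There is c = c(‖X‖_∞, m) such that for 0 < ε < 1/(ω(0,1) ∨ 1): if max_{k=1..m} |X_{s,t}^k − Y_{s,t}^k| / ω(s,t)^{k/p} ≤ ε for all s < t, then d(X_{s,t}, Y_{s,t}) ≤ c ε^{1/m} ω(s,t)^{1/p}; and conversely if d(X_{s,t}, Y_{s,t}) ≤ ε ω(s,t)^{1/p} then max_{k=1..m} |X_{s,t}^k − Y_{s,t}^k| / ω(s,t)^{k/p} ≤ c ε. Consequently the two corresponding distances induce the same topology on path space. -/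

import Mathlib

open scoped BigOperators NNReal

/-- A control function on the simplex `{0 ≤ s ≤ t ≤ 1}`. -/
def IsControl (ω : ℝ → ℝ → ℝ) : Prop :=
  ContinuousOn (fun q : ℝ × ℝ => ω q.1 q.2) {q | 0 ≤ q.1 ∧ q.1 ≤ q.2 ∧ q.2 ≤ 1} ∧
  (∀ s t u, 0 ≤ s → s ≤ t → t ≤ u → u ≤ 1 → ω s t + ω t u ≤ ω s u) ∧
  (∀ s t, 0 ≤ s → s ≤ t → t ≤ 1 → 0 ≤ ω s t) ∧
  (∀ t, 0 ≤ t → t ≤ 1 → ω t t = 0)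

/-- The `i`-th graded component of `x`; `A` with its grading `𝒜` models the truncated
tensor algebra `T⁽ᵐ⁾(V)` (with `G^m(V) ⊂ T̃⁽ᵐ⁾(V)`). -/
noncomputable def gcomp {A : Type*} [NormedRing A] [NormedAlgebra ℝ A]
    (𝒜 : ℕ → Submodule ℝ A) [GradedAlgebra 𝒜] (x : A) (i : ℕ) : A :=
  (DirectSum.decompose 𝒜 x i : A)

section Aux
variable {A : Type*} [NormedRing A] [NormedAlgebra ℝ A]
  (𝒜 : ℕ → Submodule ℝ A) [GradedAlgebra 𝒜]

lemma gcomp_add (x y : A) (k : ℕ) : gcomp 𝒜 (x + y) k = gcomp 𝒜 x k + gcomp 𝒜 y k := by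
  simp [gcomp, DirectSum.decompose_add]

lemma gcomp_sub (x y : A) (k : ℕ) : gcomp 𝒜 (x - y) k = gcomp 𝒜 x k - gcomp 𝒜 y k := by
  simp [gcomp, DirectSum.decompose_sub]

lemma gcomp_sum {ι : Type*} (s : Finset ι) (f : ι → A) (k : ℕ) :
    gcomp 𝒜 (∑ i ∈ s, f i) k = ∑ i ∈ s, gcomp 𝒜 (f i) k := by
  classical
  induction s using Finset.induction_on with
  | empty => simp [gcomp]
  | insert _ _ h ih => rw [Finset.sum_insert h, Finset.sum_insert h, gcomp_add, ih]

lemma gcomp_mem (x : A) (k : ℕ) : gcomp 𝒜 x k ∈ 𝒜 k := (DirectSum.decompose 𝒜 x k).2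

lemma gcomp_of_mem {a : A} {n : ℕ} (h : a ∈ 𝒜 n) (k : ℕ) :
    gcomp 𝒜 a k = if k = n then a else 0 := by
  split_ifs with hk
  · subst hk; exact DirectSum.decompose_of_mem_same 𝒜 h
  · exact DirectSum.decompose_of_mem_ne 𝒜 h (Ne.symm hk)

lemma gcomp_one (k : ℕ) : gcomp 𝒜 (1 : A) k = if k = 0 then 1 else 0 :=
  gcomp_of_mem 𝒜 (SetLike.one_mem_graded 𝒜) k

lemma gcomp_eq_zero_of {x : A} {i : ℕ} (h : DirectSum.decompose 𝒜 x i = 0) :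
    gcomp 𝒜 x i = 0 := by
  simp [gcomp, h]

lemma gcomp_mul (x y : A) (k : ℕ) :
    gcomp 𝒜 (x * y) k = ∑ i ∈ Finset.range (k + 1), gcomp 𝒜 x i * gcomp 𝒜 y (k - i) := by
  classical
  conv_lhs => rw [← DirectSum.sum_support_decompose 𝒜 x, ← DirectSum.sum_support_decompose 𝒜 y]
  rw [Finset.sum_mul_sum, gcomp_sum]
  have hterm : ∀ i ∈ (DirectSum.decompose 𝒜 x).support,
      gcomp 𝒜 (∑ j ∈ (DirectSum.decompose 𝒜 y).support,
        (DirectSum.decompose 𝒜 x i : A) * (DirectSum.decompose 𝒜 y j : A)) k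
      = ∑ j ∈ (DirectSum.decompose 𝒜 y).support,
          if k = i + j then gcomp 𝒜 x i * gcomp 𝒜 y j else 0 := by
    intro i _
    rw [gcomp_sum]
    refine Finset.sum_congr rfl fun j _ => ?_
    exact gcomp_of_mem 𝒜 (SetLike.mul_mem_graded (gcomp_mem 𝒜 x i) (gcomp_mem 𝒜 y j)) k
  rw [Finset.sum_congr rfl hterm]
  -- now a double sum with ite
  have h1 : ∀ i ∈ (DirectSum.decompose 𝒜 x).support,
      (∑ j ∈ (DirectSum.decompose 𝒜 y).support,
        if k = i + j then gcomp 𝒜 x i * gcomp 𝒜 y j else 0)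
      = if i ≤ k then gcomp 𝒜 x i * gcomp 𝒜 y (k - i) else 0 := by
    intro i _
    by_cases hik : i ≤ k
    · simp only [hik, if_true]
      have hcond : ∀ j, (k = i + j) ↔ (j = k - i) := by
        intro j; omega
      simp only [hcond]
      rw [Finset.sum_ite_eq']
      split_ifs with hmem
      · rfl
      · rw [gcomp_eq_zero_of 𝒜 (DFinsupp.notMem_support_iff.mp hmem), mul_zero]
    · simp only [hik, if_false]
      apply Finset.sum_eq_zero
      intro j _
      have : ¬ (k = i + j) := by omega
      simp [this]
  rw [Finset.sum_congr rfl h1]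
  -- sum over support with ite i ≤ k = sum over range (k+1)
  rw [← Finset.sum_filter]
  apply Finset.sum_subset_zero_on_sdiff
  · intro i hi
    simp only [Finset.mem_filter] at hi
    simp only [Finset.mem_range]
    omega
  · intro i hi
    simp only [Finset.mem_sdiff, Finset.mem_range, Finset.mem_filter, not_and] at hi
    rcases hi with ⟨hik, hns⟩
    by_cases hmem : i ∈ (DirectSum.decompose 𝒜 x).support
    · exact absurd (by omega) (hns hmem)
    · rw [gcomp_eq_zero_of 𝒜 (DFinsupp.notMem_support_iff.mp hmem), zero_mul]
  · intro i _
    rfl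
end Aux

section Aux2
variable {A : Type*} [NormedRing A] [NormedAlgebra ℝ A]
  (𝒜 : ℕ → Submodule ℝ A) [GradedAlgebra 𝒜] {m : ℕ}

lemma gcomp_top (htrunc : ∀ i, m < i → 𝒜 i = ⊥) (x : A) {k : ℕ} (h : m < k) :
    gcomp 𝒜 x k = 0 := by
  have hmem := gcomp_mem 𝒜 x k
  rw [htrunc k h, Submodule.mem_bot] at hmem
  exact hmem

lemma gcomp_pow_lt (a : A) (h0 : gcomp 𝒜 a 0 = 0) :
    ∀ j k : ℕ, k < j → gcomp 𝒜 (a ^ j) k = 0 := by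
  intro j
  induction j with
  | zero => omega
  | succ j ih =>
    intro k hk
    rw [pow_succ, gcomp_mul]
    apply Finset.sum_eq_zero
    intro i hi
    simp only [Finset.mem_range] at hi
    by_cases hij : i < j
    · rw [ih i hij, zero_mul]
    · have h1 : i = k ∧ k = j := by omega
      rcases h1 with ⟨rfl, rfl⟩
      rw [Nat.sub_self, h0, mul_zero]

lemma eq_zero_of_gcomp {x : A} (h : ∀ k, gcomp 𝒜 x k = 0) : x = 0 := by
  classical
  rw [← DirectSum.sum_support_decompose 𝒜 x]
  exact Finset.sum_eq_zero fun i _ => h i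

lemma pow_succ_eq_zero (htrunc : ∀ i, m < i → 𝒜 i = ⊥) (a : A) (h0 : gcomp 𝒜 a 0 = 0) :
    a ^ (m + 1) = 0 := by
  apply eq_zero_of_gcomp 𝒜
  intro k
  by_cases hk : k < m + 1
  · exact gcomp_pow_lt 𝒜 a h0 (m + 1) k hk
  · exact gcomp_top 𝒜 htrunc _ (by omega)

lemma ring_inverse_spec (htrunc : ∀ i, m < i → 𝒜 i = ⊥) (w : A) (h0 : gcomp 𝒜 w 0 = 1) :
    Ring.inverse w * w = 1 ∧ w * Ring.inverse w = 1 ∧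
      Ring.inverse w = ∑ j ∈ Finset.range (m + 1), (1 - w) ^ j := by
  set a : A := 1 - w with ha
  have ha0 : gcomp 𝒜 a 0 = 0 := by
    rw [ha, gcomp_sub, gcomp_one, h0]; simp
  have hnil : a ^ (m + 1) = 0 := pow_succ_eq_zero 𝒜 htrunc a ha0
  set u : A := ∑ j ∈ Finset.range (m + 1), a ^ j with hu
  have haw : a - 1 = -w := by rw [ha, sub_sub_cancel_left]
  have huw : u * w = 1 := by
    have h1 := geom_sum_mul a (m + 1)
    rw [hnil, zero_sub, haw, mul_neg] at h1
    exact neg_injective h1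
  have hwu : w * u = 1 := by
    have h1 := mul_geom_sum a (m + 1)
    rw [hnil, zero_sub, haw, neg_mul] at h1
    exact neg_injective h1
  have hinv : Ring.inverse w = u := by
    have : Ring.inverse ((⟨w, u, hwu, huw⟩ : Aˣ) : A) = u := Ring.inverse_unit _
    exact this
  rw [hinv]
  exact ⟨huw, hwu, rfl⟩

end Aux2

/-- The homogeneous norm `‖x‖ = max_{i=1..m} (i!|xⁱ|)^{1/i}`. -/
noncomputable def hnorm {A : Type*} [NormedRing A] [NormedAlgebra ℝ A]
    (𝒜 : ℕ → Submodule ℝ A) [GradedAlgebra 𝒜] (m : ℕ) (x : A) : ℝ :=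
  (((Finset.Icc 1 m).sup fun i =>
    ((i.factorial : ℝ≥0) * ‖gcomp 𝒜 x i‖₊) ^ ((i : ℝ)⁻¹) : ℝ≥0) : ℝ)

section Aux3
variable {A : Type*} [NormedRing A] [NormedAlgebra ℝ A]
  (𝒜 : ℕ → Submodule ℝ A) [GradedAlgebra 𝒜] {m : ℕ}

lemma norm_gcomp_mul_le (x y : A) (k : ℕ) :
    ‖gcomp 𝒜 (x * y) k‖ ≤ ∑ i ∈ Finset.range (k + 1), ‖gcomp 𝒜 x i‖ * ‖gcomp 𝒜 y (k - i)‖ := by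
  rw [gcomp_mul]
  refine (norm_sum_le _ _).trans (Finset.sum_le_sum fun i _ => norm_mul_le _ _)

lemma conv_bound (a b : A) {Ca Cb ρ : ℝ} (hρ : 0 ≤ ρ) (hCa : 0 ≤ Ca) (hCb : 0 ≤ Cb)
    (ha : ∀ i, ‖gcomp 𝒜 a i‖ ≤ Ca * ρ ^ i) (hb : ∀ i, ‖gcomp 𝒜 b i‖ ≤ Cb * ρ ^ i) (k : ℕ) :
    ‖gcomp 𝒜 (a * b) k‖ ≤ (k + 1 : ℝ) * Ca * Cb * ρ ^ k := by
  refine (norm_gcomp_mul_le 𝒜 a b k).trans ?_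
  have hterm : ∀ i ∈ Finset.range (k + 1),
      ‖gcomp 𝒜 a i‖ * ‖gcomp 𝒜 b (k - i)‖ ≤ Ca * Cb * ρ ^ k := by
    intro i hi
    simp only [Finset.mem_range] at hi
    have h1 : ‖gcomp 𝒜 a i‖ * ‖gcomp 𝒜 b (k - i)‖ ≤ (Ca * ρ ^ i) * (Cb * ρ ^ (k - i)) :=
      mul_le_mul (ha i) (hb (k - i)) (norm_nonneg _)
        (mul_nonneg hCa (pow_nonneg hρ _))
    refine h1.trans (le_of_eq ?_)
    rw [show (Ca * ρ ^ i) * (Cb * ρ ^ (k - i)) = Ca * Cb * (ρ ^ i * ρ ^ (k - i)) by ring,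
      ← pow_add, Nat.add_sub_cancel' (by omega)]
  refine (Finset.sum_le_sum hterm).trans (le_of_eq ?_)
  rw [Finset.sum_const, Finset.card_range, nsmul_eq_mul]
  push_cast
  ring

lemma pow_comp_bound (htrunc : ∀ i, m < i → 𝒜 i = ⊥) {a : A} {ρ : ℝ} (hρ : 0 ≤ ρ)
    (ha : ∀ i, ‖gcomp 𝒜 a i‖ ≤ ρ ^ i) :
    ∀ j, 1 ≤ j → ∀ k, ‖gcomp 𝒜 (a ^ j) k‖ ≤ ((m : ℝ) + 1) ^ (j - 1) * ρ ^ k := by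
  intro j
  induction j with
  | zero => omega
  | succ j ih =>
    intro _ k
    by_cases hj : 1 ≤ j
    · by_cases hk : k ≤ m
      · rw [pow_succ]
        have h1 := conv_bound 𝒜 (a ^ j) a (Ca := ((m : ℝ) + 1) ^ (j - 1)) (Cb := 1) hρ
          (by positivity) zero_le_one (ih hj) (by simpa using ha) k
        refine h1.trans ?_
        have h2 : (k + 1 : ℝ) ≤ (m : ℝ) + 1 := by exact_mod_cast by omega
        have h3 : ((m : ℝ) + 1) ^ (j - 1) * ((m : ℝ) + 1) = ((m : ℝ) + 1) ^ (j + 1 - 1) := by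
          rw [← pow_succ]
          congr 1
          omega
        calc (k + 1 : ℝ) * ((m : ℝ) + 1) ^ (j - 1) * 1 * ρ ^ k
            ≤ ((m : ℝ) + 1) * ((m : ℝ) + 1) ^ (j - 1) * 1 * ρ ^ k := by
              have : (0:ℝ) ≤ ((m : ℝ) + 1) ^ (j - 1) * 1 * ρ ^ k := by positivity
              nlinarith [pow_nonneg hρ k, pow_nonneg (show (0:ℝ) ≤ (m:ℝ)+1 by positivity) (j-1)]
          _ = ((m : ℝ) + 1) ^ (j + 1 - 1) * ρ ^ k := by rw [← h3]; ring
      · rw [gcomp_top 𝒜 htrunc _ (by omega)]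
        simp only [norm_zero]
        positivity
    · have hj0 : j = 0 := by omega
      subst hj0
      simpa using ha k

lemma comp_le_of_hnorm_le {x : A} {ρ : ℝ} (h : hnorm 𝒜 m x ≤ ρ) {k : ℕ}
    (hk : k ∈ Finset.Icc 1 m) : ‖gcomp 𝒜 x k‖ ≤ ρ ^ k := by
  have hk1 : 1 ≤ k := (Finset.mem_Icc.mp hk).1
  have hρ0 : 0 ≤ ρ := le_trans (NNReal.coe_nonneg _) h
  have hterm := Finset.le_sup (f := fun i : ℕ =>
    ((i.factorial : ℝ≥0) * ‖gcomp 𝒜 x i‖₊) ^ ((i : ℝ)⁻¹)) hk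
  have h2 : (((k.factorial : ℝ≥0) * ‖gcomp 𝒜 x k‖₊) ^ ((k : ℝ)⁻¹) : ℝ≥0) ≤
      Real.toNNReal ρ := by
    refine le_trans hterm ?_
    exact NNReal.le_toNNReal_of_coe_le h
  rw [Real.le_toNNReal_iff_coe_le hρ0] at h2
  push_cast [NNReal.coe_rpow] at h2
  set t : ℝ := (k.factorial : ℝ) * ‖gcomp 𝒜 x k‖ with ht
  have ht0 : 0 ≤ t := by positivity
  have h3 : t ≤ ρ ^ k := by
    have h4 : (t ^ ((k : ℝ)⁻¹)) ^ k ≤ ρ ^ k :=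
      pow_le_pow_left₀ (Real.rpow_nonneg ht0 _) h2 k
    rwa [← Real.rpow_natCast (t ^ ((k : ℝ)⁻¹)) k, ← Real.rpow_mul ht0,
      inv_mul_cancel₀ (show (k : ℝ) ≠ 0 by exact_mod_cast (by omega : k ≠ 0)),
      Real.rpow_one] at h4
  refine le_trans ?_ h3
  rw [ht]
  exact le_mul_of_one_le_left (norm_nonneg _)
    (by exact_mod_cast Nat.one_le_iff_ne_zero.mpr k.factorial_ne_zero)

lemma hnorm_le_of {x : A} {C : ℝ} (hC : 0 ≤ C)
    (h : ∀ k ∈ Finset.Icc 1 m, ((k.factorial : ℝ) * ‖gcomp 𝒜 x k‖) ^ ((k : ℝ)⁻¹) ≤ C) :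
    hnorm 𝒜 m x ≤ C := by
  have h1 : ((Finset.Icc 1 m).sup fun i =>
      ((i.factorial : ℝ≥0) * ‖gcomp 𝒜 x i‖₊) ^ ((i : ℝ)⁻¹)) ≤ Real.toNNReal C := by
    refine Finset.sup_le fun k hk => ?_
    rw [Real.le_toNNReal_iff_coe_le hC]
    push_cast [NNReal.coe_rpow]
    exact h k hk
  calc hnorm 𝒜 m x ≤ ((Real.toNNReal C : ℝ≥0) : ℝ) := NNReal.coe_le_coe.mpr h1
    _ = C := Real.coe_toNNReal C hC

end Aux3

section Aux4
variable {A : Type*} [NormedRing A] [NormedAlgebra ℝ A]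
  (𝒜 : ℕ → Submodule ℝ A) [GradedAlgebra 𝒜] {m : ℕ}

lemma gcomp_inverse_zero (htrunc : ∀ i, m < i → 𝒜 i = ⊥) {w : A} (h0 : gcomp 𝒜 w 0 = 1) :
    gcomp 𝒜 (Ring.inverse w) 0 = 1 := by
  obtain ⟨-, -, hrepr⟩ := ring_inverse_spec 𝒜 htrunc w h0
  have ha0 : gcomp 𝒜 (1 - w) 0 = 0 := by rw [gcomp_sub, gcomp_one, h0]; simp
  rw [hrepr, gcomp_sum, Finset.sum_eq_single 0]
  · simp [gcomp_one]
  · intro j _ hj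
    exact gcomp_pow_lt 𝒜 (1 - w) ha0 j 0 (by omega)
  · intro h
    exact absurd (Finset.mem_range.mpr (by omega)) h

lemma inverse_comp_bound (htrunc : ∀ i, m < i → 𝒜 i = ⊥) {w : A} {ρ : ℝ} (hρ : 0 ≤ ρ)
    (h0 : gcomp 𝒜 w 0 = 1) (h1x : ∀ i, ‖gcomp 𝒜 (1 - w) i‖ ≤ ρ ^ i) (i : ℕ) :
    ‖gcomp 𝒜 (Ring.inverse w) i‖ ≤ (max ‖(1 : A)‖ 1 + m * ((m : ℝ) + 1) ^ m) * ρ ^ i := by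
  obtain ⟨-, -, hrepr⟩ := ring_inverse_spec 𝒜 htrunc w h0
  rw [hrepr, gcomp_sum]
  refine (norm_sum_le _ _).trans ?_
  rw [Finset.sum_range_succ']
  have hbound : ∀ j ∈ Finset.range m, ‖gcomp 𝒜 ((1 - w) ^ (j + 1)) i‖ ≤
      ((m : ℝ) + 1) ^ m * ρ ^ i := by
    intro j hj
    simp only [Finset.mem_range] at hj
    refine (pow_comp_bound 𝒜 htrunc hρ h1x (j + 1) (by omega) i).trans ?_
    have : ((m : ℝ) + 1) ^ (j + 1 - 1) ≤ ((m : ℝ) + 1) ^ m := by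
      apply pow_le_pow_right₀ (by exact_mod_cast Nat.le_add_left 1 m) (by omega)
    exact mul_le_mul_of_nonneg_right this (pow_nonneg hρ i)
  have h1 : ∑ j ∈ Finset.range m, ‖gcomp 𝒜 ((1 - w) ^ (j + 1)) i‖ ≤
      m * (((m : ℝ) + 1) ^ m * ρ ^ i) := by
    refine (Finset.sum_le_sum hbound).trans (le_of_eq ?_)
    rw [Finset.sum_const, Finset.card_range, nsmul_eq_mul]
  have h2 : ‖gcomp 𝒜 ((1 - w) ^ 0) i‖ ≤ max ‖(1 : A)‖ 1 * ρ ^ i := by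
    rw [pow_zero, gcomp_one]
    by_cases hi : i = 0
    · subst hi
      simp only [if_true, pow_zero, mul_one]
      exact le_max_left _ _
    · simp only [hi, if_false, norm_zero]
      positivity
  calc (∑ j ∈ Finset.range m, ‖gcomp 𝒜 ((1 - w) ^ (j + 1)) i‖) + ‖gcomp 𝒜 ((1 - w) ^ 0) i‖
      ≤ m * (((m : ℝ) + 1) ^ m * ρ ^ i) + max ‖(1 : A)‖ 1 * ρ ^ i := add_le_add h1 h2
    _ = (max ‖(1 : A)‖ 1 + m * ((m : ℝ) + 1) ^ m) * ρ ^ i := by ring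

lemma le_rpow_inv_of_rpow_le {a b p : ℝ} (ha : 0 ≤ a) (hp : 0 < p) (h : a ^ p ≤ b) :
    a ≤ b ^ (1 / p) := by
  have h1 := Real.rpow_le_rpow (Real.rpow_nonneg ha p) h (by positivity : (0:ℝ) ≤ 1 / p)
  rwa [← Real.rpow_mul ha, mul_one_div, div_self hp.ne', Real.rpow_one] at h1

end Aux4

/-- Left-invariant distance `d(g,h) = ‖g⁻¹ ⊗ h‖`. -/
noncomputable def hdist {A : Type*} [NormedRing A] [NormedAlgebra ℝ A]
    (𝒜 : ℕ → Submodule ℝ A) [GradedAlgebra 𝒜] (m : ℕ) (g h : A) : ℝ :=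
  hnorm 𝒜 m (Ring.inverse g * h)

/-- Increment `X_{s,t} = X_s⁻¹ ⊗ X_t`. -/
noncomputable def incT {A : Type*} [NormedRing A] [NormedAlgebra ℝ A]
    (X : ℝ → A) (s t : ℝ) : A := Ring.inverse (X s) * X t

set_option maxHeartbeats 2000000 in
/-- Comparison of the component-wise distance and the homogeneous-norm distance, for
paths `X, Y` with `p`-variation controlled by `ω`: there is `c = c(‖X‖_∞, m)` such
that for `0 < ε < 1/(ω(0,1) ∨ 1)` and all `s < t` in `[0,1]`:
if `|X_{s,t}^k − Y_{s,t}^k| ≤ ε ω(s,t)^{k/p}` for `k = 1,…,m` then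
`d(X_{s,t}, Y_{s,t}) ≤ c ε^{1/m} ω(s,t)^{1/p}`; and if
`d(X_{s,t}, Y_{s,t}) ≤ ε ω(s,t)^{1/p}` then
`|X_{s,t}^k − Y_{s,t}^k| ≤ c ε ω(s,t)^{k/p}` for `k = 1,…,m`.
(Consequently the two induced distances give the same topology on path space.) -/
theorem component_vs_homogeneous_distance {A : Type*} [NormedRing A] [NormedAlgebra ℝ A]
    (𝒜 : ℕ → Submodule ℝ A) [GradedAlgebra 𝒜] (m : ℕ) (hm : 1 ≤ m)
    (htrunc : ∀ i, m < i → 𝒜 i = ⊥)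
    (p : ℝ) (hp : 1 ≤ p)
    (ω : ℝ → ℝ → ℝ) (hω : IsControl ω)
    (hωpos : ∀ s t : ℝ, 0 ≤ s → s < t → t ≤ 1 → 0 < ω s t)
    (X Y : ℝ → A)
    (hX0 : ∀ t ∈ Set.Icc (0:ℝ) 1, gcomp 𝒜 (X t) 0 = 1)
    (hY0 : ∀ t ∈ Set.Icc (0:ℝ) 1, gcomp 𝒜 (Y t) 0 = 1)
    (hXvar : ∀ s t : ℝ, 0 ≤ s → s ≤ t → t ≤ 1 → hnorm 𝒜 m (incT X s t) ^ p ≤ ω s t)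
    (hYvar : ∀ s t : ℝ, 0 ≤ s → s ≤ t → t ≤ 1 → hnorm 𝒜 m (incT Y s t) ^ p ≤ ω s t) :
    ∃ c > (0:ℝ), ∀ ε : ℝ, 0 < ε → ε < 1 / max (ω 0 1) 1 →
      ∀ s t : ℝ, 0 ≤ s → s < t → t ≤ 1 →
        ((∀ k ∈ Finset.Icc 1 m,
            ‖gcomp 𝒜 (incT X s t) k - gcomp 𝒜 (incT Y s t) k‖ ≤
              ε * ω s t ^ ((k : ℝ) / p)) →
          hdist 𝒜 m (incT X s t) (incT Y s t) ≤
            c * ε ^ ((m : ℝ)⁻¹) * ω s t ^ (1 / p)) ∧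
        ((hdist 𝒜 m (incT X s t) (incT Y s t) ≤ ε * ω s t ^ (1 / p)) →
          ∀ k ∈ Finset.Icc 1 m,
            ‖gcomp 𝒜 (incT X s t) k - gcomp 𝒜 (incT Y s t) k‖ ≤
              c * ε * ω s t ^ ((k : ℝ) / p)) := by
  classical
  have hp0 : 0 < p := lt_of_lt_of_le one_pos hp
  set N1 : ℝ := max ‖(1 : A)‖ 1 with hN1def
  have hN1_1 : (1:ℝ) ≤ N1 := le_max_right _ _
  have hN1_0 : (0:ℝ) ≤ N1 := le_trans zero_le_one hN1_1
  set Cu : ℝ := N1 + m * ((m : ℝ) + 1) ^ m with hCudef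
  have hCu1 : (1:ℝ) ≤ Cu := le_trans hN1_1 (le_add_of_nonneg_right (by positivity))
  have hCu0 : (0:ℝ) ≤ Cu := le_trans zero_le_one hCu1
  set c : ℝ := (m.factorial : ℝ) * (((m : ℝ) + 1) * Cu) + ((m : ℝ) + 1) * N1 with hcdef
  have hfac1 : (1:ℝ) ≤ (m.factorial : ℝ) := by
    exact_mod_cast Nat.one_le_iff_ne_zero.mpr m.factorial_ne_zero
  have hc1 : (m.factorial : ℝ) * (((m : ℝ) + 1) * Cu) ≤ c := by
    rw [hcdef]
    have : (0:ℝ) ≤ ((m : ℝ) + 1) * N1 := by positivity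
    linarith
  have hc2 : ((m : ℝ) + 1) * N1 ≤ c := by
    rw [hcdef]
    have : (0:ℝ) ≤ (m.factorial : ℝ) * (((m : ℝ) + 1) * Cu) := by positivity
    linarith
  have hcpos : 0 < c := by
    refine lt_of_lt_of_le ?_ hc2
    positivity
  refine ⟨c, hcpos, ?_⟩
  intro ε hε hεlt s t hs hst ht
  have hst' : s ≤ t := hst.le
  have hs1 : s ≤ 1 := le_trans hst' ht
  have ht0 : 0 ≤ t := le_trans hs hst'
  have hωst : 0 < ω s t := hωpos s t hs hst ht
  set ρ : ℝ := ω s t ^ (1 / p) with hρdef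
  have hρ : 0 < ρ := Real.rpow_pos_of_pos hωst _
  have hρk : ∀ k : ℕ, ρ ^ k = ω s t ^ ((k : ℝ) / p) := by
    intro k
    rw [hρdef, ← Real.rpow_natCast (ω s t ^ (1 / p)) k, ← Real.rpow_mul hωst.le]
    congr 1
    ring
  have hε1 : ε ≤ 1 := by
    refine le_of_lt (lt_of_lt_of_le hεlt ?_)
    rw [div_le_one (by positivity)]
    exact le_max_right _ _
  -- increments
  set x : A := incT X s t with hxdef
  set y : A := incT Y s t with hydef
  have hXs0 : gcomp 𝒜 (X s) 0 = 1 := hX0 s ⟨hs, hs1⟩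
  have hXt0 : gcomp 𝒜 (X t) 0 = 1 := hX0 t ⟨ht0, ht⟩
  have hYs0 : gcomp 𝒜 (Y s) 0 = 1 := hY0 s ⟨hs, hs1⟩
  have hYt0 : gcomp 𝒜 (Y t) 0 = 1 := hY0 t ⟨ht0, ht⟩
  have hmul0 : ∀ a b : A, gcomp 𝒜 (a * b) 0 = gcomp 𝒜 a 0 * gcomp 𝒜 b 0 := by
    intro a b
    rw [gcomp_mul]
    simp
  have hx0 : gcomp 𝒜 x 0 = 1 := by
    rw [hxdef]
    show gcomp 𝒜 (Ring.inverse (X s) * X t) 0 = 1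
    rw [hmul0, gcomp_inverse_zero 𝒜 htrunc hXs0, hXt0, one_mul]
  have hy0 : gcomp 𝒜 y 0 = 1 := by
    rw [hydef]
    show gcomp 𝒜 (Ring.inverse (Y s) * Y t) 0 = 1
    rw [hmul0, gcomp_inverse_zero 𝒜 htrunc hYs0, hYt0, one_mul]
  -- hnorm bounds and component bounds
  have hhx : hnorm 𝒜 m x ≤ ρ :=
    le_rpow_inv_of_rpow_le (NNReal.coe_nonneg _) hp0 (hXvar s t hs hst' ht)
  have hhy : hnorm 𝒜 m y ≤ ρ :=
    le_rpow_inv_of_rpow_le (NNReal.coe_nonneg _) hp0 (hYvar s t hs hst' ht)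
  have hxk : ∀ i, ‖gcomp 𝒜 x i‖ ≤ N1 * ρ ^ i := by
    intro i
    rcases Nat.lt_or_ge i 1 with hi | hi
    · interval_cases i
      rw [hx0, pow_zero, mul_one]
      exact le_max_left _ _
    rcases Nat.lt_or_ge m i with hi2 | hi2
    · rw [gcomp_top 𝒜 htrunc _ hi2, norm_zero]
      positivity
    · refine (comp_le_of_hnorm_le 𝒜 hhx (Finset.mem_Icc.mpr ⟨hi, hi2⟩)).trans ?_
      exact le_mul_of_one_le_left (by positivity) hN1_1
  have h1x : ∀ i, ‖gcomp 𝒜 (1 - x) i‖ ≤ ρ ^ i := by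
    intro i
    rcases Nat.lt_or_ge i 1 with hi | hi
    · interval_cases i
      rw [gcomp_sub, gcomp_one, hx0]
      simp
    rw [gcomp_sub, gcomp_one, if_neg (by omega), zero_sub, norm_neg]
    rcases Nat.lt_or_ge m i with hi2 | hi2
    · rw [gcomp_top 𝒜 htrunc _ hi2, norm_zero]
      positivity
    · exact comp_le_of_hnorm_le 𝒜 hhx (Finset.mem_Icc.mpr ⟨hi, hi2⟩)
  obtain ⟨hux, hxu, -⟩ := ring_inverse_spec 𝒜 htrunc x hx0
  have hui : ∀ i, ‖gcomp 𝒜 (Ring.inverse x) i‖ ≤ Cu * ρ ^ i :=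
    inverse_comp_bound 𝒜 htrunc hρ.le hx0 h1x
  set z : A := Ring.inverse x * y with hzdef
  have hdist_eq : hdist 𝒜 m (incT X s t) (incT Y s t) = hnorm 𝒜 m z := rfl
  have hz0 : gcomp 𝒜 z 0 = 1 := by
    rw [hzdef, hmul0, gcomp_inverse_zero 𝒜 htrunc hx0, hy0, one_mul]
  constructor
  · -- component bound implies hdist bound
    intro hcomp
    have hyx : ∀ j, ‖gcomp 𝒜 (y - x) j‖ ≤ ε * ρ ^ j := by
      intro j
      rcases Nat.lt_or_ge j 1 with hj | hj
      · interval_cases j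
        rw [gcomp_sub, hx0, hy0, sub_self, norm_zero]
        positivity
      rcases Nat.lt_or_ge m j with hj2 | hj2
      · rw [gcomp_sub, gcomp_top 𝒜 htrunc _ hj2, gcomp_top 𝒜 htrunc _ hj2, sub_self,
          norm_zero]
        positivity
      · rw [gcomp_sub, norm_sub_rev, ← gcomp_sub]
        have hthis := hcomp j (Finset.mem_Icc.mpr ⟨hj, hj2⟩)
        rw [← gcomp_sub] at hthis
        rw [hρk j]
        exact hthis
    have hz1 : z - 1 = Ring.inverse x * (y - x) := by
      rw [mul_sub, hux, hzdef]
    have hzk : ∀ k ∈ Finset.Icc 1 m, ‖gcomp 𝒜 z k‖ ≤ ((m : ℝ) + 1) * Cu * ε * ρ ^ k := by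
      intro k hk
      obtain ⟨hk1, hk2⟩ := Finset.mem_Icc.mp hk
      have heq : gcomp 𝒜 z k = gcomp 𝒜 (z - 1) k := by
        rw [gcomp_sub, gcomp_one, if_neg (by omega), sub_zero]
      rw [heq, hz1]
      refine (conv_bound 𝒜 _ _ hρ.le hCu0 hε.le hui hyx k).trans ?_
      have hk3 : (k + 1 : ℝ) ≤ (m : ℝ) + 1 := by exact_mod_cast by omega
      exact mul_le_mul_of_nonneg_right (mul_le_mul_of_nonneg_right
        (mul_le_mul_of_nonneg_right hk3 hCu0) hε.le) (pow_nonneg hρ.le k)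
    rw [hdist_eq]
    refine hnorm_le_of 𝒜 (by positivity) ?_
    intro k hk
    obtain ⟨hk1, hk2⟩ := Finset.mem_Icc.mp hk
    have hkR : (0:ℝ) < (k : ℝ) := by exact_mod_cast by omega
    have ht0' : (0:ℝ) ≤ (k.factorial : ℝ) * ‖gcomp 𝒜 z k‖ := by positivity
    have hb1 : (k.factorial : ℝ) * ‖gcomp 𝒜 z k‖ ≤
        ((k.factorial : ℝ) * (((m : ℝ) + 1) * Cu)) * ε * ρ ^ k := by
      have hf0 : (0:ℝ) ≤ (k.factorial : ℝ) := by positivity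
      refine le_trans (mul_le_mul_of_nonneg_left (hzk k hk) hf0) (le_of_eq (by ring))
    refine (Real.rpow_le_rpow ht0' hb1 (by positivity)).trans ?_
    have hkfac1 : (1:ℝ) ≤ (k.factorial : ℝ) := by
      exact_mod_cast Nat.one_le_iff_ne_zero.mpr k.factorial_ne_zero
    have hmc : (1:ℝ) ≤ (m : ℝ) + 1 := le_add_of_nonneg_left (Nat.cast_nonneg m)
    have hb2 : (1:ℝ) ≤ ((m : ℝ) + 1) * Cu := by
      have := mul_le_mul hmc hCu1 zero_le_one (le_trans zero_le_one hmc)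
      simpa using this
    have hbase1 : (1:ℝ) ≤ (k.factorial : ℝ) * (((m : ℝ) + 1) * Cu) := by
      have := mul_le_mul hkfac1 hb2 zero_le_one (le_trans zero_le_one hkfac1)
      simpa using this
    have he1 : (((k.factorial : ℝ) * (((m : ℝ) + 1) * Cu)) * ε * ρ ^ k) ^ ((k:ℝ)⁻¹) =
        (((k.factorial : ℝ) * (((m : ℝ) + 1) * Cu)) ^ ((k:ℝ)⁻¹)) * ε ^ ((k:ℝ)⁻¹) *
          (ρ ^ k) ^ ((k:ℝ)⁻¹) := by
      rw [Real.mul_rpow (mul_nonneg (by positivity) hε.le) (by positivity),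
        Real.mul_rpow (by positivity) hε.le]
    rw [he1]
    have hf1 : (((k.factorial : ℝ) * (((m : ℝ) + 1) * Cu)) ^ ((k:ℝ)⁻¹)) ≤
        (m.factorial : ℝ) * (((m : ℝ) + 1) * Cu) := by
      have hstep : (((k.factorial : ℝ) * (((m : ℝ) + 1) * Cu)) ^ ((k:ℝ)⁻¹)) ≤
          (k.factorial : ℝ) * (((m : ℝ) + 1) * Cu) := by
        calc (((k.factorial : ℝ) * (((m : ℝ) + 1) * Cu)) ^ ((k:ℝ)⁻¹))
            ≤ (((k.factorial : ℝ) * (((m : ℝ) + 1) * Cu)) ^ (1:ℝ)) :=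
              Real.rpow_le_rpow_of_exponent_le hbase1
                (by rw [inv_le_one_iff₀]; right; exact_mod_cast hk1)
          _ = (k.factorial : ℝ) * (((m : ℝ) + 1) * Cu) := Real.rpow_one _
      refine hstep.trans (mul_le_mul_of_nonneg_right ?_ (by positivity))
      exact_mod_cast Nat.factorial_le hk2
    have hf2 : ε ^ ((k:ℝ)⁻¹) ≤ ε ^ ((m:ℝ)⁻¹) := by
      refine Real.rpow_le_rpow_of_exponent_ge hε hε1 ?_
      rw [inv_le_inv₀ (by exact_mod_cast by omega) hkR]
      exact_mod_cast hk2
    have hf3 : (ρ ^ k) ^ ((k:ℝ)⁻¹) = ρ := by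
      rw [← Real.rpow_natCast ρ k, ← Real.rpow_mul hρ.le,
        mul_inv_cancel₀ hkR.ne', Real.rpow_one]
    rw [hf3]
    calc ((k.factorial : ℝ) * (((m : ℝ) + 1) * Cu)) ^ ((k:ℝ)⁻¹) * ε ^ ((k:ℝ)⁻¹) * ρ
        ≤ ((m.factorial : ℝ) * (((m : ℝ) + 1) * Cu)) * ε ^ ((m:ℝ)⁻¹) * ρ := by
          refine mul_le_mul_of_nonneg_right ?_ hρ.le
          exact mul_le_mul hf1 hf2 (Real.rpow_nonneg hε.le _) (by positivity)
      _ ≤ c * ε ^ ((m:ℝ)⁻¹) * ρ := by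
          refine mul_le_mul_of_nonneg_right ?_ hρ.le
          exact mul_le_mul_of_nonneg_right hc1 (Real.rpow_nonneg hε.le _)
  · -- hdist bound implies component bound
    intro hd k hk
    obtain ⟨hk1, hk2⟩ := Finset.mem_Icc.mp hk
    rw [hdist_eq] at hd
    have hz1j : ∀ j, ‖gcomp 𝒜 (z - 1) j‖ ≤ ε * ρ ^ j := by
      intro j
      rcases Nat.lt_or_ge j 1 with hj | hj
      · interval_cases j
        rw [gcomp_sub, hz0, gcomp_one, if_pos rfl, sub_self, norm_zero]
        positivity
      rcases Nat.lt_or_ge m j with hj2 | hj2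
      · rw [gcomp_sub, gcomp_top 𝒜 htrunc _ hj2, gcomp_one, if_neg (by omega), sub_zero,
          norm_zero]
        positivity
      · have h1 : ‖gcomp 𝒜 z j‖ ≤ (ε * ρ) ^ j :=
          comp_le_of_hnorm_le 𝒜 hd (Finset.mem_Icc.mpr ⟨hj, hj2⟩)
        have h2 : (ε * ρ) ^ j ≤ ε * ρ ^ j := by
          rw [mul_pow]
          refine mul_le_mul_of_nonneg_right ?_ (pow_nonneg hρ.le j)
          exact pow_le_of_le_one hε.le hε1 (by omega)
        rw [gcomp_sub, gcomp_one, if_neg (by omega), sub_zero]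
        exact h1.trans h2
    have hyx2 : y - x = x * (z - 1) := by
      rw [mul_sub, mul_one, hzdef, ← mul_assoc, hxu, one_mul]
    have hbnd : ‖gcomp 𝒜 (y - x) k‖ ≤ ((k : ℝ) + 1) * N1 * ε * ρ ^ k := by
      rw [hyx2]
      exact conv_bound 𝒜 _ _ hρ.le hN1_0 hε.le hxk hz1j k
    have hkey : ‖gcomp 𝒜 x k - gcomp 𝒜 y k‖ ≤ ((k : ℝ) + 1) * N1 * ε * ρ ^ k := by
      rw [norm_sub_rev, ← gcomp_sub]
      exact hbnd
    refine le_trans hkey ?_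
    rw [← hρk k]
    have hk3 : (k + 1 : ℝ) ≤ (m : ℝ) + 1 := by exact_mod_cast by omega
    calc ((k : ℝ) + 1) * N1 * ε * ρ ^ k ≤ ((m : ℝ) + 1) * N1 * ε * ρ ^ k := by
          exact mul_le_mul_of_nonneg_right (mul_le_mul_of_nonneg_right
            (mul_le_mul_of_nonneg_right hk3 hN1_0) hε.le) (pow_nonneg hρ.le k)
      _ ≤ c * ε * ρ ^ k := by
          exact mul_le_mul_of_nonneg_right (mul_le_mul_of_nonneg_right hc2 hε.le)
            (pow_nonneg hρ.le k)
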